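/- Let β_k = 2^k B_k / k! and β_{k,p} := (−1)^p (p−1)! Σ_{0 ≤ i ≤ ⌊(p−1)/2⌋} β_{k+p−2i}/(2i+1)!. Then for every integer m ≥ 1 one has β_{1, 2m−1} = −1/((2m−1)(2m+1)) and β_{1, 2m} = 0. -/

import Mathlib

/-- `β_k = 2^k B_k / k!`, where `B_k` is the k-th Bernoulli number (with `B₁ = −1/2`). -/
noncomputable def smallBeta (k : ℕ) : ℚ := 2 ^ k * bernoulli k / (Nat.factorial k)

/-- `β_{k,p} = (−1)^p (p−1)! Σ_{0 ≤ i ≤ ⌊(p−1)/2⌋} β_{k+p−2i}/(2i+1)!`. -/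
noncomputable def betaKP (k p : ℕ) : ℚ :=
  (-1) ^ p * (Nat.factorial (p - 1)) *
    ∑ i ∈ Finset.range ((p - 1) / 2 + 1),
      smallBeta (k + p - 2 * i) / (Nat.factorial (2 * i + 1))

open Nat Finset PowerSeries

-- `(rescale 2 B) * (exp + 1) = 2 * B` where `B` is the Bernoulli EGF.
lemma rescale_two_bernoulli :
    (PowerSeries.rescale (2:ℚ) (bernoulliPowerSeries ℚ)) * (PowerSeries.exp ℚ + 1)
      = 2 * bernoulliPowerSeries ℚ := by
  have hB := bernoulliPowerSeries_mul_exp_sub_one ℚ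
  have hexp : PowerSeries.exp ℚ - 1 ≠ 0 := by
    intro h
    have := congrArg (PowerSeries.coeff (R := ℚ) 1) h
    simp [PowerSeries.coeff_exp] at this
  have h2 : PowerSeries.rescale (2:ℚ) (PowerSeries.exp ℚ - 1)
      = (PowerSeries.exp ℚ)^2 - 1 := by
    rw [map_sub, map_one, PowerSeries.exp_pow_eq_rescale_exp]
    norm_num
  have hR : (PowerSeries.rescale (2:ℚ) (bernoulliPowerSeries ℚ)) * ((PowerSeries.exp ℚ)^2 - 1)
      = 2 * PowerSeries.X := by
    rw [← h2, ← map_mul, hB, PowerSeries.rescale_X]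
    simp [PowerSeries.C_eq_algebraMap]
    rw [map_ofNat]
  have key : ((PowerSeries.rescale (2:ℚ) (bernoulliPowerSeries ℚ)) * (PowerSeries.exp ℚ + 1))
      * (PowerSeries.exp ℚ - 1) = (2 * bernoulliPowerSeries ℚ) * (PowerSeries.exp ℚ - 1) := by
    have : ((PowerSeries.exp ℚ)^2 - 1)
        = (PowerSeries.exp ℚ + 1) * (PowerSeries.exp ℚ - 1) := by ring
    calc ((PowerSeries.rescale (2:ℚ) (bernoulliPowerSeries ℚ)) * (PowerSeries.exp ℚ + 1))
        * (PowerSeries.exp ℚ - 1)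
        = (PowerSeries.rescale (2:ℚ) (bernoulliPowerSeries ℚ)) * ((PowerSeries.exp ℚ)^2 - 1) := by
          rw [this]; ring
      _ = 2 * PowerSeries.X := hR
      _ = 2 * (bernoulliPowerSeries ℚ * (PowerSeries.exp ℚ - 1)) := by rw [hB]
      _ = (2 * bernoulliPowerSeries ℚ) * (PowerSeries.exp ℚ - 1) := by ring
  exact mul_right_cancel₀ hexp key

lemma coeff_key (N : ℕ) :
    ∑ k ∈ range (N + 1), (2:ℚ)^k * (bernoulli k / k !) * (1 / (N - k)!)
      = (2 - 2^N) * bernoulli N / N ! := by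
  have h : (PowerSeries.rescale (2:ℚ) (bernoulliPowerSeries ℚ)) * PowerSeries.exp ℚ
      = 2 * bernoulliPowerSeries ℚ - PowerSeries.rescale (2:ℚ) (bernoulliPowerSeries ℚ) := by
    linear_combination rescale_two_bernoulli
  have h2 := congrArg (PowerSeries.coeff (R := ℚ) N) h
  rw [PowerSeries.coeff_mul, Nat.sum_antidiagonal_eq_sum_range_succ_mk] at h2
  simp only [bernoulliPowerSeries, PowerSeries.coeff_rescale, PowerSeries.coeff_mk,
    PowerSeries.coeff_exp, map_sub, Algebra.algebraMap_self, RingHom.id_apply, map_mul,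
    one_div] at h2
  have h3 : (PowerSeries.coeff (R := ℚ) N) (2 * PowerSeries.mk fun n => bernoulli n / (n ! : ℚ))
      = 2 * (bernoulli N / N !) := by
    rw [(map_ofNat (PowerSeries.C (R := ℚ)) 2).symm, PowerSeries.coeff_C_mul,
      PowerSeries.coeff_mk]
  rw [h3] at h2
  simp only [one_div]
  rw [Nat.succ_eq_add_one] at h2
  rw [h2]
  ring

lemma sum_choose_two_pow (N : ℕ) :
    ∑ k ∈ range (N + 1), (N.choose k : ℚ) * 2^k * bernoulli k = (2 - 2^N) * bernoulli N := by
  have h := coeff_key N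
  have hN : (N ! : ℚ) ≠ 0 := by exact_mod_cast N.factorial_ne_zero
  calc ∑ k ∈ range (N+1), (N.choose k : ℚ) * 2^k * bernoulli k
      = (∑ k ∈ range (N+1), (2:ℚ)^k * (bernoulli k / k !) * (1/((N-k)! : ℚ))) * N ! := by
        rw [Finset.sum_mul]
        refine Finset.sum_congr rfl fun k hk => ?_
        have hk' : k ≤ N := Nat.lt_succ_iff.mp (Finset.mem_range.mp hk)
        have h1 : (k ! : ℚ) ≠ 0 := by exact_mod_cast k.factorial_ne_zero
        have h2 : (((N-k)!) : ℚ) ≠ 0 := by exact_mod_cast (N-k).factorial_ne_zero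
        rw [Nat.cast_choose ℚ hk']
        field_simp
    _ = (2 - 2^N) * bernoulli N := by rw [h]; field_simp

lemma sum_range_two_mul' (f : ℕ → ℚ) (n : ℕ) :
    ∑ k ∈ range (2*n), f k = ∑ i ∈ range n, (f (2*i) + f (2*i+1)) := by
  induction n with
  | zero => simp
  | succ n ih =>
    rw [show 2*(n+1) = 2*n+1+1 by ring, sum_range_succ, sum_range_succ, ih, sum_range_succ]
    ring

lemma even_sum_key (m : ℕ) (hm : 1 ≤ m) :
    ∑ j ∈ range (m+1), ((2*m+1).choose (2*j) : ℚ) * 2^(2*j) * bernoulli (2*j)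
      = 2*m+1 := by
  have hS := sum_choose_two_pow (2*m+1)
  have hodd : bernoulli (2*m+1) = 0 := by
    rw [bernoulli_eq_bernoulli'_of_ne_one (by omega),
      bernoulli'_eq_zero_of_odd (odd_two_mul_add_one m) (by omega)]
  rw [hodd, mul_zero] at hS
  have hsplit := sum_range_two_mul'
    (fun k => ((2*m+1).choose k : ℚ) * 2^k * bernoulli k) (m+1)
  rw [show 2*(m+1) = 2*m+1+1 by ring] at hsplit
  rw [hsplit, Finset.sum_add_distrib] at hS
  have hoddsum : ∑ i ∈ range (m+1), ((2*m+1).choose (2*i+1) : ℚ) * 2^(2*i+1) * bernoulli (2*i+1)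
      = -(2*m+1) := by
    rw [Finset.sum_eq_single 0]
    · simp [bernoulli_one]
      ring
    · intro b _ hb
      have hz : bernoulli (2*b+1) = 0 := by
        rw [bernoulli_eq_bernoulli'_of_ne_one (by omega),
          bernoulli'_eq_zero_of_odd (odd_two_mul_add_one b) (by omega)]
      simp [hz]
    · intro h; exact absurd (Finset.mem_range.mpr (by omega)) h
  rw [hoddsum] at hS
  linarith

lemma smallBeta_zero : smallBeta 0 = 1 := by
  simp [smallBeta]

lemma smallBeta_odd (j : ℕ) (hj : 1 ≤ j) : smallBeta (2*j+1) = 0 := by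
  unfold smallBeta
  rw [bernoulli_eq_bernoulli'_of_ne_one (by omega),
    bernoulli'_eq_zero_of_odd (odd_two_mul_add_one j) (by omega)]
  simp

lemma beta_sum (m : ℕ) (hm : 1 ≤ m) :
    ∑ i ∈ range m, smallBeta (2*m - 2*i) / (Nat.factorial (2*i+1) : ℚ)
      = 2*m / (Nat.factorial (2*m+1) : ℚ) := by
  have hK := even_sum_key m hm
  have hfac : ((2*m+1)! : ℚ) ≠ 0 := by exact_mod_cast (2*m+1).factorial_ne_zero
  have hstep : ∑ j ∈ range (m+1), smallBeta (2*j) / ((2*(m-j)+1)! : ℚ)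
      = (2*m+1) / ((2*m+1)! : ℚ) := by
    rw [eq_div_iff hfac, ← hK, Finset.sum_mul]
    refine Finset.sum_congr rfl fun j hj => ?_
    have hj' : j ≤ m := Nat.lt_succ_iff.mp (Finset.mem_range.mp hj)
    have h2j : 2*j ≤ 2*m+1 := by omega
    rw [Nat.cast_choose ℚ h2j, show 2*m+1 - 2*j = 2*(m-j)+1 by omega]
    unfold smallBeta
    have h1 : ((2*j)! : ℚ) ≠ 0 := by exact_mod_cast (2*j).factorial_ne_zero
    have h2 : ((2*(m-j)+1)! : ℚ) ≠ 0 := by exact_mod_cast (2*(m-j)+1).factorial_ne_zero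
    field_simp
  have hrefl : ∑ i ∈ range (m+1), smallBeta (2*m - 2*i) / ((2*i+1)! : ℚ)
      = (2*m+1) / ((2*m+1)! : ℚ) := by
    rw [← hstep, ← Finset.sum_range_reflect (fun j => smallBeta (2*j) / ((2*(m-j)+1)! : ℚ)) (m+1)]
    refine Finset.sum_congr rfl fun i hi => ?_
    have him : i < m + 1 := Finset.mem_range.mp hi
    rw [show 2*(m+1-1-i) = 2*m - 2*i by omega, show 2*(m-(m+1-1-i))+1 = 2*i+1 by omega]
  rw [sum_range_succ] at hrefl
  rw [show 2*m - 2*m = 0 by omega, smallBeta_zero] at hrefl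
  have : ∑ i ∈ range m, smallBeta (2*m - 2*i) / ((2*i+1)! : ℚ)
      = (2*m+1) / ((2*m+1)! : ℚ) - 1 / ((2*m+1)! : ℚ) := by
    rw [← hrefl]; ring
  rw [this]
  field_simp
  ring

/-- `β_{1,2m−1} = −1/((2m−1)(2m+1))` and `β_{1,2m} = 0` for every `m ≥ 1`. -/
theorem statement_11 (m : ℕ) (hm : 1 ≤ m) :
    betaKP 1 (2 * m - 1) = -(1 / ((2 * (m : ℚ) - 1) * (2 * (m : ℚ) + 1))) ∧
    betaKP 1 (2 * m) = 0 := by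
  obtain ⟨n, rfl⟩ : ∃ n, m = n + 1 := ⟨m - 1, by omega⟩
  constructor
  · have hbs := beta_sum (n+1) (by omega)
    rw [show 2*(n+1) - 1 = 2*n+1 by omega]
    unfold betaKP
    rw [show (2*n+1-1)/2 + 1 = n+1 by omega]
    have hsum : ∑ i ∈ range (n+1), smallBeta (1 + (2*n+1) - 2*i) / (Nat.factorial (2*i+1) : ℚ)
        = 2*(((n+1:ℕ)):ℚ) / (Nat.factorial (2*(n+1)+1) : ℚ) := by
      rw [← hbs]
      refine Finset.sum_congr rfl fun i hi => ?_
      have him : i < n + 1 := Finset.mem_range.mp hi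
      rw [show 1 + (2*n+1) - 2*i = 2*(n+1) - 2*i by omega]
    rw [hsum]
    have hf : ((2*(n+1)+1)! : ℚ) = (2*n+3) * ((2*n+2) * ((2*n+1) * ((2*n)!))) := by
      rw [show 2*(n+1)+1 = (2*n+2)+1 by ring, Nat.factorial_succ,
        show 2*n+2 = (2*n+1)+1 by ring, Nat.factorial_succ,
        show 2*n+1 = (2*n)+1 by omega, Nat.factorial_succ]
      push_cast
      ring
    rw [show (2*n+1-1 : ℕ) = 2*n by omega, hf,
      show ((-1:ℚ))^(2*n+1) = -1 from Odd.neg_one_pow ⟨n, by ring⟩]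
    have h0 : ((2*n)! : ℚ) ≠ 0 := by exact_mod_cast (2*n).factorial_ne_zero
    have h1 : (2*(n:ℚ)+1) ≠ 0 := by positivity
    have h2 : (2*(n:ℚ)+2) ≠ 0 := by positivity
    have h3 : (2*(n:ℚ)+3) ≠ 0 := by positivity
    push_cast
    rw [show (2*((n:ℚ)+1)-1) = 2*(n:ℚ)+1 by ring, show (2*((n:ℚ)+1)+1) = 2*(n:ℚ)+3 by ring]
    field_simp
  · rw [show 2*(n+1) = 2*n+2 by ring]
    unfold betaKP
    rw [show (2*n+2-1)/2 + 1 = n+1 by omega]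
    rw [Finset.sum_eq_zero, mul_zero]
    intro i hi
    have him : i < n + 1 := Finset.mem_range.mp hi
    rw [show 1 + (2*n+2) - 2*i = 2*(n+1-i)+1 by omega, smallBeta_odd _ (by omega), zero_div]
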